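/- Let f : ℝ^M → ℝ be twice continuously differentiable with bounded first and second partial derivatives, and fix x^t ∈ ℝ^M. For η > 0 let P_η be the Gaussian measure N(x^t, η I_M) on ℝ^M and define EIG_i^η(x) = ∫ (x_i − x_i⁰) [∫₀¹ (∂f/∂x_i)(x⁰ + α(x − x⁰)) dα] dP_η(x⁰). Then for every i the map x ↦ EIG_i^η(x) is differentiable in x_i, and the limit as η → 0⁺ of (∂EIG_i^η/∂x_i)(x^t) equals (∂f/∂x_i)(x^t), i.e., it equals the LIME attribution score LIME⁰_i(x^t) in the vanishing-regularization limit. -/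

import Mathlib

open MeasureTheory ProbabilityTheory Real Filter Topology NNReal ENNReal Set

lemma integral_Ioi_mul_exp {b : ℝ} (hb : 0 < b) :
    ∫ y in Ioi (0:ℝ), y * rexp (-b * y ^ 2) = (2 * b)⁻¹ := by
  have hderiv : ∀ y ∈ Ioi (0:ℝ), HasDerivAt (fun y : ℝ => -(2 * b)⁻¹ * rexp (-b * y ^ 2))
      (y * rexp (-b * y ^ 2)) y := by
    intro y _
    have h1 : HasDerivAt (fun y : ℝ => -b * y ^ 2) (-b * (2 * y)) y := by
      simpa using (hasDerivAt_pow 2 y).const_mul (-b)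
    have h2 := (h1.exp).const_mul (-(2 * b)⁻¹)
    refine h2.congr_deriv ?_
    have hbb : b * b⁻¹ = 1 := mul_inv_cancel₀ hb.ne'
    linear_combination (y * rexp (-b * y ^ 2)) * hbb
  have htend : Tendsto (fun y : ℝ => -(2 * b)⁻¹ * rexp (-b * y ^ 2)) atTop (𝓝 0) := by
    have h0 : Tendsto (fun y : ℝ => -b * y ^ 2) atTop atBot := by
      have := Filter.Tendsto.const_mul_atTop hb (tendsto_pow_atTop (two_ne_zero))
      simpa [neg_mul] using this
    have := (Real.tendsto_exp_atBot.comp h0).const_mul (-(2 * b)⁻¹)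
    simpa using this
  have := integral_Ioi_of_hasDerivAt_of_tendsto
    (by fun_prop : Continuous fun y : ℝ => -(2 * b)⁻¹ * rexp (-b * y ^ 2)).continuousWithinAt
    hderiv ((integrable_mul_exp_neg_mul_sq hb).integrableOn) htend
  rw [this]
  simp

lemma integral_abs_mul_exp {b : ℝ} (hb : 0 < b) :
    ∫ y : ℝ, |y| * rexp (-b * y ^ 2) = b⁻¹ := by
  have h : ∫ y : ℝ, |y| * rexp (-b * y ^ 2)
      = ∫ y : ℝ, (fun u => u * rexp (-b * u ^ 2)) |y| := by
    congr 1; funext y; simp [sq_abs]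
  rw [h, integral_comp_abs (f := fun u => u * rexp (-b * u ^ 2)), integral_Ioi_mul_exp hb]
  field_simp

lemma integrable_abs_mul_exp {b : ℝ} (hb : 0 < b) :
    Integrable (fun y : ℝ => |y| * rexp (-b * y ^ 2)) := by
  have := (integrable_mul_exp_neg_mul_sq hb).abs
  refine this.congr (Eventually.of_forall fun y => ?_)
  simp [abs_mul, abs_of_pos (Real.exp_pos _)]

lemma gaussian_abs_moment (m : ℝ) {v : ℝ≥0} (hv : v ≠ 0) :
    Integrable (fun x => |x - m|) (gaussianReal m v) ∧
      ∫ x, |x - m| ∂(gaussianReal m v) ≤ Real.sqrt v := by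
  have hv0 : (0:ℝ) < v := by exact_mod_cast pos_iff_ne_zero.mpr hv
  set b : ℝ := (2 * (v:ℝ))⁻¹ with hbdef
  have hb : 0 < b := by positivity
  set c : ℝ := (Real.sqrt (2 * π * v))⁻¹ with hcdef
  have hpdf : ∀ x : ℝ, gaussianPDFReal m v x = c * rexp (-b * (x - m) ^ 2) := by
    intro x
    rw [gaussianPDFReal]
    congr 2
    rw [neg_div, hbdef]
    field_simp
  set d : ℝ → ℝ≥0 := fun x => (gaussianPDFReal m v x).toNNReal with hd
  have hdm : Measurable d := (measurable_gaussianPDFReal m v).real_toNNReal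
  have hdc : ∀ x : ℝ, (d x : ℝ) = gaussianPDFReal m v x := fun x =>
    Real.coe_toNNReal _ (gaussianPDFReal_nonneg m v x)
  have hmeas : gaussianReal m v = volume.withDensity fun x => (d x : ℝ≥0∞) := by
    rw [gaussianReal_of_var_ne_zero m hv]
    rfl
  have hptw : ∀ x : ℝ, (d x : ℝ) • |x - m| = c * (|x - m| * rexp (-b * (x - m) ^ 2)) := by
    intro x
    rw [smul_eq_mul, hdc, hpdf]
    ring
  have hint : Integrable (fun x : ℝ => (d x : ℝ) • |x - m|) volume := by
    have h1 : Integrable (fun x : ℝ => c * (|x - m| * rexp (-b * (x - m) ^ 2))) volume :=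
      ((integrable_abs_mul_exp hb).comp_sub_right m).const_mul c
    exact h1.congr (Eventually.of_forall fun x => (hptw x).symm)
  constructor
  · rw [hmeas]
    exact (integrable_withDensity_iff_integrable_coe_smul hdm).mpr hint
  · have hI : ∫ x, |x - m| ∂(gaussianReal m v) = c * b⁻¹ := by
      rw [hmeas, integral_withDensity_eq_integral_smul hdm]
      calc ∫ x, d x • |x - m|
          = ∫ x, c * (|x - m| * rexp (-b * (x - m) ^ 2)) := by
            exact integral_congr_ae (Eventually.of_forall fun x => hptw x)
        _ = c * ∫ x, |x - m| * rexp (-b * (x - m) ^ 2) := integral_const_mul c _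
        _ = c * ∫ y, |y| * rexp (-b * y ^ 2) := by
            rw [← integral_sub_right_eq_self (fun y : ℝ => |y| * rexp (-b * y ^ 2)) m]
        _ = c * b⁻¹ := by rw [integral_abs_mul_exp hb]
    rw [hI]
    have h4 : (2:ℝ) * Real.sqrt v ≤ Real.sqrt (2 * π * v) := by
      have h44 : (4:ℝ) * v ≤ 2 * π * v := by nlinarith [Real.two_le_pi, hv0.le]
      calc (2:ℝ) * Real.sqrt v = Real.sqrt (4 * v) := by
            rw [show (4:ℝ) * v = 2 ^ 2 * v by ring, Real.sqrt_mul (by positivity) v,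
              Real.sqrt_sq (by norm_num : (0:ℝ) ≤ 2)]
        _ ≤ _ := Real.sqrt_le_sqrt h44
    have h5 : c * b⁻¹ = 2 * v / Real.sqrt (2 * π * v) := by
      rw [hcdef, hbdef, inv_inv]
      ring
    rw [h5]
    calc 2 * (v:ℝ) / Real.sqrt (2 * π * v) ≤ 2 * v / (2 * Real.sqrt v) := by
          apply div_le_div_of_nonneg_left (by positivity) (by positivity) h4
      _ = (v:ℝ) / Real.sqrt v := by rw [mul_div_mul_left _ _ (two_ne_zero)]
      _ = Real.sqrt v := Real.div_sqrt

lemma map_eval_pi_measure {M : ℕ} (μ : Fin M → Measure ℝ) [∀ j, IsProbabilityMeasure (μ j)]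
    (j : Fin M) : (Measure.pi μ).map (fun x => x j) = μ j := by
  ext s hs
  rw [Measure.map_apply (measurable_pi_apply j) hs]
  have h : (fun x : Fin M → ℝ => x j) ⁻¹' s
      = Set.univ.pi (Function.update (fun _ => Set.univ) j s) := Set.eval_preimage
  rw [h, Measure.pi_pi]
  rw [Finset.prod_eq_single j (fun k _ hk => by simp [Function.update_of_ne hk]) (by simp)]
  simp


lemma eig_hasDerivAt {M : ℕ} {f : (Fin M → ℝ) → ℝ} (hf : ContDiff ℝ 2 f)
    {C : ℝ} (hC1 : ∀ x, ‖fderiv ℝ f x‖ ≤ C) (hC2 : ∀ x, ‖fderiv ℝ (fderiv ℝ f) x‖ ≤ C)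
    (i : Fin M) (x : Fin M → ℝ) (μ : Measure (Fin M → ℝ)) [IsProbabilityMeasure μ]
    (hint : Integrable (fun x0 => |x i - x0 i|) μ) :
    Integrable (fun x0 : Fin M → ℝ =>
      (∫ α in (0:ℝ)..1, fderiv ℝ f (x0 + α • (x - x0)) (Pi.single i 1)) +
        (x i - x0 i) *
          ∫ α in (0:ℝ)..1,
            fderiv ℝ (fderiv ℝ f) (x0 + α • (x - x0)) (α • (Pi.single i 1 : Fin M → ℝ)) (Pi.single i 1)) μ ∧
    HasDerivAt
      (fun t : ℝ => ∫ x0,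
        (t - x0 i) * (∫ α in (0:ℝ)..1,
            fderiv ℝ f (x0 + α • (Function.update x i t - x0)) (Pi.single i 1)) ∂μ)
      (∫ x0,
        ((∫ α in (0:ℝ)..1, fderiv ℝ f (x0 + α • (x - x0)) (Pi.single i 1)) +
          (x i - x0 i) *
            ∫ α in (0:ℝ)..1,
              fderiv ℝ (fderiv ℝ f) (x0 + α • (x - x0)) (α • (Pi.single i 1 : Fin M → ℝ))
                (Pi.single i 1)) ∂μ)
      (x i) := by
  have hC0 : 0 ≤ C := le_trans (norm_nonneg _) (hC1 x)
  set e : Fin M → ℝ := Pi.single i 1 with he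
  have he1 : ‖e‖ = 1 := by rw [he, Pi.norm_single]; exact norm_one
  have hf1 : ContDiff ℝ 1 (fderiv ℝ f) := hf.fderiv_right (by norm_num)
  have hdc : Continuous (fderiv ℝ f) := hf1.continuous
  have hfd1 : Differentiable ℝ (fderiv ℝ f) := hf1.differentiable one_ne_zero
  have hd2c : Continuous (fderiv ℝ (fderiv ℝ f)) := hf1.continuous_fderiv one_ne_zero
  -- the update path
  have hupd : ∀ t : ℝ, HasDerivAt (fun s : ℝ => Function.update x i s) e t := by
    intro t
    have hfun : (fun s : ℝ => Function.update x i s)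
        = fun s => Function.update x i 0 + s • e := by
      funext s; ext j
      by_cases h : j = i
      · subst h; simp [he]
      · simp [Function.update_of_ne h, he, Pi.single_eq_of_ne h]
    rw [hfun]
    simpa using ((hasDerivAt_id t).smul_const e).const_add (Function.update x i 0)
  have hpath : ∀ (x0 : Fin M → ℝ) (α t : ℝ),
      HasDerivAt (fun s : ℝ => x0 + α • (Function.update x i s - x0)) (α • e) t :=
    fun x0 α t => (((hupd t).sub_const x0).const_smul α).const_add x0
  -- pointwise derivative of the inner integrand
  have hptD : ∀ (x0 : Fin M → ℝ) (α t : ℝ),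
      HasDerivAt (fun s : ℝ => fderiv ℝ f (x0 + α • (Function.update x i s - x0)) e)
        (fderiv ℝ (fderiv ℝ f) (x0 + α • (Function.update x i t - x0)) (α • e) e) t := by
    intro x0 α t
    have h1 : HasDerivAt (fun s : ℝ => fderiv ℝ f (x0 + α • (Function.update x i s - x0)))
        (fderiv ℝ (fderiv ℝ f) (x0 + α • (Function.update x i t - x0)) (α • e)) t :=
      ((hfd1 _).hasFDerivAt).comp_hasDerivAt t (hpath x0 α t)
    simpa using h1.clm_apply (hasDerivAt_const t e)
  -- G and G'
  set G : ℝ → (Fin M → ℝ) → ℝ := fun t x0 =>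
    ∫ α in (0:ℝ)..1, fderiv ℝ f (x0 + α • (Function.update x i t - x0)) e with hG
  set G' : ℝ → (Fin M → ℝ) → ℝ := fun t x0 =>
    ∫ α in (0:ℝ)..1,
      fderiv ℝ (fderiv ℝ f) (x0 + α • (Function.update x i t - x0)) (α • e) e with hG'
  -- continuity of integrands
  have hcont_inner : ∀ (t : ℝ) (x0 : Fin M → ℝ),
      Continuous fun α : ℝ => fderiv ℝ f (x0 + α • (Function.update x i t - x0)) e :=
    fun t x0 => (hdc.comp (by fun_prop)).clm_apply continuous_const
  have hcont_inner' : ∀ (t : ℝ) (x0 : Fin M → ℝ),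
      Continuous fun α : ℝ =>
        fderiv ℝ (fderiv ℝ f) (x0 + α • (Function.update x i t - x0)) (α • e) e :=
    fun t x0 => ((hd2c.comp (by fun_prop)).clm_apply (by fun_prop)).clm_apply continuous_const
  -- norm bounds
  have hbnd1 : ∀ y : Fin M → ℝ, ‖fderiv ℝ f y e‖ ≤ C := by
    intro y
    calc ‖fderiv ℝ f y e‖ ≤ ‖fderiv ℝ f y‖ * ‖e‖ := ContinuousLinearMap.le_opNorm _ _
      _ = ‖fderiv ℝ f y‖ := by rw [he1, mul_one]
      _ ≤ C := hC1 y
  have hbnd2 : ∀ (y : Fin M → ℝ) (α : ℝ), |α| ≤ 1 →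
      ‖fderiv ℝ (fderiv ℝ f) y (α • e) e‖ ≤ C := by
    intro y α hα
    calc ‖fderiv ℝ (fderiv ℝ f) y (α • e) e‖
        ≤ ‖fderiv ℝ (fderiv ℝ f) y (α • e)‖ * ‖e‖ := ContinuousLinearMap.le_opNorm _ _
      _ ≤ (‖fderiv ℝ (fderiv ℝ f) y‖ * ‖α • e‖) * ‖e‖ :=
          mul_le_mul_of_nonneg_right (ContinuousLinearMap.le_opNorm _ _) (norm_nonneg _)
      _ = ‖fderiv ℝ (fderiv ℝ f) y‖ * |α| := by
          rw [norm_smul, he1, Real.norm_eq_abs]; ring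
      _ ≤ C * 1 := mul_le_mul (hC2 y) hα (abs_nonneg α) hC0
      _ = C := mul_one C
  -- derivative of G
  have hGd : ∀ (x0 : Fin M → ℝ) (t : ℝ), HasDerivAt (fun s => G s x0) (G' t x0) t := by
    intro x0 t
    refine (intervalIntegral.hasDerivAt_integral_of_dominated_loc_of_deriv_le
      (F := fun s α => fderiv ℝ f (x0 + α • (Function.update x i s - x0)) e)
      (F' := fun s α =>
        fderiv ℝ (fderiv ℝ f) (x0 + α • (Function.update x i s - x0)) (α • e) e)
      (bound := fun _ => C) (Metric.ball_mem_nhds t zero_lt_one)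
      (Eventually.of_forall fun s => (hcont_inner s x0).aestronglyMeasurable)
      ((hcont_inner t x0).intervalIntegrable 0 1)
      (hcont_inner' t x0).aestronglyMeasurable
      (Eventually.of_forall fun α hα s _ => hbnd2 _ α ?_)
      intervalIntegrable_const
      (Eventually.of_forall fun α _ s _ => hptD x0 α s)).2
    rw [Set.uIoc_of_le zero_le_one] at hα
    rw [abs_of_pos hα.1]
    exact hα.2
  -- bounds on G, G'
  have hGb : ∀ (t : ℝ) (x0 : Fin M → ℝ), |G t x0| ≤ C := by
    intro t x0
    have := intervalIntegral.norm_integral_le_of_norm_le_const (a := 0) (b := 1) (C := C)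
      (f := fun α => fderiv ℝ f (x0 + α • (Function.update x i t - x0)) e)
      (fun α _ => hbnd1 _)
    calc |G t x0| ≤ C * |1 - 0| := by rw [← Real.norm_eq_abs]; exact this
      _ = C := by norm_num
  have hG'b : ∀ (t : ℝ) (x0 : Fin M → ℝ), |G' t x0| ≤ C := by
    intro t x0
    have := intervalIntegral.norm_integral_le_of_norm_le_const (a := 0) (b := 1) (C := C)
      (f := fun α =>
        fderiv ℝ (fderiv ℝ f) (x0 + α • (Function.update x i t - x0)) (α • e) e)
      (fun α hα => hbnd2 _ α (by
        rw [Set.uIoc_of_le zero_le_one] at hα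
        rw [abs_of_pos hα.1]
        exact hα.2))
    calc |G' t x0| ≤ C * |1 - 0| := by rw [← Real.norm_eq_abs]; exact this
      _ = C := by norm_num
  -- continuity in x0
  have hGcont : ∀ t : ℝ, Continuous fun x0 => G t x0 := by
    intro t
    apply intervalIntegral.continuous_parametric_intervalIntegral_of_continuous'
      (f := fun x0 α => fderiv ℝ f (x0 + α • (Function.update x i t - x0)) e)
    exact (hdc.comp (by fun_prop)).clm_apply continuous_const
  have hG'cont : ∀ t : ℝ, Continuous fun x0 => G' t x0 := by
    intro t
    apply intervalIntegral.continuous_parametric_intervalIntegral_of_continuous'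
      (f := fun x0 α =>
        fderiv ℝ (fderiv ℝ f) (x0 + α • (Function.update x i t - x0)) (α • e) e)
    exact ((hd2c.comp (by fun_prop)).clm_apply (by fun_prop)).clm_apply continuous_const
  -- outer differentiation under the integral
  have main := hasDerivAt_integral_of_dominated_loc_of_deriv_le
    (F := fun t x0 => (t - x0 i) * G t x0)
    (F' := fun t x0 => G t x0 + (t - x0 i) * G' t x0)
    (x₀ := x i) (μ := μ)
    (bound := fun x0 => C + (1 + |x i - x0 i|) * C) (Metric.ball_mem_nhds (x i) zero_lt_one)
    (Eventually.of_forall fun t =>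
      (((continuous_const.sub (continuous_apply i)).mul (hGcont t)).aestronglyMeasurable))
    (by
      refine Integrable.mono' (hint.const_mul C)
        (((continuous_const.sub (continuous_apply i)).mul (hGcont (x i))).aestronglyMeasurable)
        (Eventually.of_forall fun x0 => ?_)
      rw [Real.norm_eq_abs, abs_mul]
      rw [mul_comm]
      exact mul_le_mul_of_nonneg_right (hGb _ _) (abs_nonneg _))
    (((hGcont (x i)).add
      ((continuous_const.sub (continuous_apply i)).mul (hG'cont (x i)))).aestronglyMeasurable)
    (Eventually.of_forall fun x0 t ht => by
      have h1 : |t - x0 i| ≤ 1 + |x i - x0 i| := by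
        have h2 : |t - x i| < 1 := by
          rw [Metric.mem_ball, Real.dist_eq] at ht
          exact ht
        calc |t - x0 i| = |(t - x i) + (x i - x0 i)| := by ring_nf
          _ ≤ |t - x i| + |x i - x0 i| := abs_add_le _ _
          _ ≤ 1 + |x i - x0 i| := by linarith
      calc ‖G t x0 + (t - x0 i) * G' t x0‖
          ≤ |G t x0| + |t - x0 i| * |G' t x0| := by
            rw [Real.norm_eq_abs]
            exact (abs_add_le _ _).trans (by rw [abs_mul])
        _ ≤ C + (1 + |x i - x0 i|) * C := by
            have := hG'b t x0
            have := hGb t x0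
            have h3 : |t - x0 i| * |G' t x0| ≤ (1 + |x i - x0 i|) * C :=
              mul_le_mul h1 (hG'b t x0) (abs_nonneg _) (by positivity)
            linarith)
    ((integrable_const C).add (((integrable_const (1:ℝ)).add hint).mul_const C))
    (Eventually.of_forall fun x0 t _ => by
      refine (((hasDerivAt_id t).sub_const (x0 i)).mul (hGd x0 t)).congr_deriv ?_
      simp)
  obtain ⟨hI, hD⟩ := main
  have hxupd : Function.update x i (x i) = x := Function.update_eq_self i x
  have hI' : Integrable (fun x0 => G (x i) x0 + (x i - x0 i) * G' (x i) x0) μ := hI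
  have hD' : HasDerivAt (fun t => ∫ x0, (t - x0 i) * G t x0 ∂μ)
      (∫ x0, (G (x i) x0 + (x i - x0 i) * G' (x i) x0) ∂μ) (x i) := hD
  have hfun : (fun x0 : Fin M → ℝ => G (x i) x0 + (x i - x0 i) * G' (x i) x0)
      = fun x0 : Fin M → ℝ =>
        (∫ α in (0:ℝ)..1, fderiv ℝ f (x0 + α • (x - x0)) e) +
          (x i - x0 i) *
            ∫ α in (0:ℝ)..1,
              fderiv ℝ (fderiv ℝ f) (x0 + α • (x - x0)) (α • e) e := by
    funext x0
    simp only [hG, hG', hxupd]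
  rw [hfun] at hI' hD'
  exact ⟨hI', hD'⟩


theorem stmt_9 (M : ℕ) (f : (Fin M → ℝ) → ℝ) (hf : ContDiff ℝ 2 f)
    (C : ℝ) (hC1 : ∀ x : Fin M → ℝ, ‖fderiv ℝ f x‖ ≤ C)
    (hC2 : ∀ x : Fin M → ℝ, ‖fderiv ℝ (fderiv ℝ f) x‖ ≤ C)
    (xt : Fin M → ℝ)
    (P : ℝ≥0 → Measure (Fin M → ℝ))
    (hP : ∀ η : ℝ≥0, P η = Measure.pi fun i => ProbabilityTheory.gaussianReal (xt i) η)
    (EIG : ℝ≥0 → Fin M → (Fin M → ℝ) → ℝ)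
    (hEIG : ∀ (η : ℝ≥0) (i : Fin M) (x : Fin M → ℝ),
      EIG η i x = ∫ x0 : Fin M → ℝ,
        (x i - x0 i) *
          (∫ α in (0:ℝ)..1, fderiv ℝ f (x0 + α • (x - x0)) (Pi.single i 1)) ∂(P η)) :
    ∀ i : Fin M,
      (∀ η : ℝ≥0, 0 < η → ∀ x : Fin M → ℝ,
        DifferentiableAt ℝ (fun t : ℝ => EIG η i (Function.update x i t)) (x i)) ∧
      Tendsto (fun η : ℝ≥0 => deriv (fun t : ℝ => EIG η i (Function.update xt i t)) (xt i))
        (𝓝[>] 0) (𝓝 (fderiv ℝ f xt (Pi.single i 1))) := by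
  intro i
  have hC0 : 0 ≤ C := le_trans (norm_nonneg _) (hC1 xt)
  have hf1 : ContDiff ℝ 1 (fderiv ℝ f) := hf.fderiv_right (by norm_num)
  have hdc : Continuous (fderiv ℝ f) := hf1.continuous
  have hfd1 : Differentiable ℝ (fderiv ℝ f) := hf1.differentiable one_ne_zero
  have he1 : ‖(Pi.single i 1 : Fin M → ℝ)‖ = 1 := by rw [Pi.norm_single]; exact norm_one
  -- probability instances
  have hprob : ∀ η : ℝ≥0, IsProbabilityMeasure (P η) := fun η => by
    rw [hP η]; infer_instance
  -- marginals
  have hmap : ∀ (η : ℝ≥0) (j : Fin M),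
      (P η).map (fun x0 => x0 j) = ProbabilityTheory.gaussianReal (xt j) η := fun η j => by
    haveI := hprob η
    rw [hP η]
    exact map_eval_pi_measure _ j
  -- integrability of coordinate deviations
  have hcoord : ∀ (η : ℝ≥0), η ≠ 0 → ∀ j : Fin M,
      Integrable (fun x0 : Fin M → ℝ => |x0 j - xt j|) (P η) ∧
        ∫ x0, |x0 j - xt j| ∂(P η) ≤ Real.sqrt η := by
    intro η hη j
    have hg := gaussian_abs_moment (xt j) hη
    have hmeas : AEStronglyMeasurable (fun y : ℝ => |y - xt j|)
        ((P η).map (fun x0 => x0 j)) := ((continuous_id.sub continuous_const).abs).aestronglyMeasurable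
    constructor
    · have := (integrable_map_measure hmeas ((measurable_pi_apply j).aemeasurable)).mp
        (by rw [hmap η j]; exact hg.1)
      exact this
    · have heq : ∫ x0, |x0 j - xt j| ∂(P η)
          = ∫ y, |y - xt j| ∂(ProbabilityTheory.gaussianReal (xt j) η) := by
        rw [← hmap η j, integral_map ((measurable_pi_apply j).aemeasurable) hmeas]
      rw [heq]
      exact hg.2
  -- integrability hypothesis for the key lemma
  have hintkey : ∀ (η : ℝ≥0), η ≠ 0 → ∀ x : Fin M → ℝ,
      Integrable (fun x0 : Fin M → ℝ => |x i - x0 i|) (P η) := by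
    intro η hη x
    haveI := hprob η
    refine Integrable.mono' ((integrable_const (|x i - xt i|)).add ((hcoord η hη i).1))
      (((continuous_const.sub (continuous_apply i)).abs).aestronglyMeasurable)
      (Eventually.of_forall fun x0 => ?_)
    rw [Real.norm_eq_abs, abs_abs]
    calc |x i - x0 i| = |(x i - xt i) + (xt i - x0 i)| := by ring_nf
      _ ≤ |x i - xt i| + |xt i - x0 i| := abs_add_le _ _
      _ = |x i - xt i| + |x0 i - xt i| := by rw [abs_sub_comm (xt i)]
  -- rewrite EIG as the parametric integral
  have heig : ∀ (η : ℝ≥0) (x : Fin M → ℝ),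
      (fun t : ℝ => EIG η i (Function.update x i t))
        = fun t : ℝ => ∫ x0,
            (t - x0 i) * (∫ α in (0:ℝ)..1,
              fderiv ℝ f (x0 + α • (Function.update x i t - x0)) (Pi.single i 1)) ∂(P η) := by
    intro η x
    funext t
    rw [hEIG η i (Function.update x i t)]
    simp only [Function.update_self]
  -- the key derivative fact
  have key : ∀ (η : ℝ≥0), η ≠ 0 → ∀ x : Fin M → ℝ,
      Integrable (fun x0 : Fin M → ℝ =>
        (∫ α in (0:ℝ)..1, fderiv ℝ f (x0 + α • (x - x0)) (Pi.single i 1)) +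
          (x i - x0 i) *
            ∫ α in (0:ℝ)..1,
              fderiv ℝ (fderiv ℝ f) (x0 + α • (x - x0)) (α • (Pi.single i 1 : Fin M → ℝ))
                (Pi.single i 1)) (P η) ∧
      HasDerivAt (fun t : ℝ => EIG η i (Function.update x i t))
        (∫ x0,
          ((∫ α in (0:ℝ)..1, fderiv ℝ f (x0 + α • (x - x0)) (Pi.single i 1)) +
            (x i - x0 i) *
              ∫ α in (0:ℝ)..1,
                fderiv ℝ (fderiv ℝ f) (x0 + α • (x - x0)) (α • (Pi.single i 1 : Fin M → ℝ))
                  (Pi.single i 1)) ∂(P η)) (x i) := by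
    intro η hη x
    haveI := hprob η
    have h := eig_hasDerivAt hf hC1 hC2 i x (P η) (hintkey η hη x)
    refine ⟨h.1, ?_⟩
    rw [heig η x]
    exact h.2
  refine ⟨fun η hη x => ?_, ?_⟩
  · exact ((key η hη.ne' x).2).differentiableAt
  -- the limit
  · set L := fderiv ℝ f xt (Pi.single i 1) with hL
    set H : (Fin M → ℝ) → ℝ := fun x0 =>
      (∫ α in (0:ℝ)..1, fderiv ℝ f (x0 + α • (xt - x0)) (Pi.single i 1)) +
        (xt i - x0 i) *
          ∫ α in (0:ℝ)..1,
            fderiv ℝ (fderiv ℝ f) (x0 + α • (xt - x0)) (α • (Pi.single i 1 : Fin M → ℝ))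
              (Pi.single i 1) with hH
    -- pointwise bound
    have hlip : ∀ y z : Fin M → ℝ, ‖fderiv ℝ f y - fderiv ℝ f z‖ ≤ C * ‖y - z‖ := fun y z =>
      convex_univ.norm_image_sub_le_of_norm_fderiv_le (fun w _ => hfd1 w)
        (fun w _ => hC2 w) (Set.mem_univ z) (Set.mem_univ y)
    have hptwise : ∀ x0 : Fin M → ℝ, |H x0 - L| ≤ 2 * C * ∑ j, |x0 j - xt j| := by
      intro x0
      set S := ∑ j, |x0 j - xt j| with hSdef
      have hS0 : 0 ≤ S := Finset.sum_nonneg fun j _ => abs_nonneg _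
      have hnorm : ‖x0 - xt‖ ≤ S := by
        rw [pi_norm_le_iff_of_nonneg hS0]
        intro j
        rw [Pi.sub_apply, Real.norm_eq_abs]
        exact Finset.single_le_sum (fun k _ => abs_nonneg (x0 k - xt k)) (Finset.mem_univ j)
      have hGdiff : ∀ α ∈ Set.uIoc (0:ℝ) 1,
          ‖fderiv ℝ f (x0 + α • (xt - x0)) (Pi.single i 1) - L‖ ≤ C * S := by
        intro α hα
        rw [Set.uIoc_of_le zero_le_one] at hα
        have hq : x0 + α • (xt - x0) - xt = (1 - α) • (x0 - xt) := by
          ext j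
          simp only [Pi.add_apply, Pi.sub_apply, Pi.smul_apply, smul_eq_mul]
          ring
        have h1α : |1 - α| ≤ 1 := by
          rw [abs_of_nonneg (by linarith [hα.2])]
          linarith [hα.1]
        calc ‖fderiv ℝ f (x0 + α • (xt - x0)) (Pi.single i 1) - L‖
            = ‖(fderiv ℝ f (x0 + α • (xt - x0)) - fderiv ℝ f xt) (Pi.single i 1)‖ := by
              rw [hL, ContinuousLinearMap.sub_apply]
          _ ≤ ‖fderiv ℝ f (x0 + α • (xt - x0)) - fderiv ℝ f xt‖ * ‖(Pi.single i 1 : Fin M → ℝ)‖ :=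
              ContinuousLinearMap.le_opNorm _ _
          _ = ‖fderiv ℝ f (x0 + α • (xt - x0)) - fderiv ℝ f xt‖ := by rw [he1, mul_one]
          _ ≤ C * ‖x0 + α • (xt - x0) - xt‖ := hlip _ _
          _ = C * (|1 - α| * ‖x0 - xt‖) := by rw [hq, norm_smul, Real.norm_eq_abs]
          _ ≤ C * S := by
              refine mul_le_mul_of_nonneg_left ?_ hC0
              calc |1 - α| * ‖x0 - xt‖ ≤ 1 * S :=
                  mul_le_mul h1α hnorm (norm_nonneg _) zero_le_one
                _ = S := one_mul S
      have hcont1 : Continuous fun α : ℝ => fderiv ℝ f (x0 + α • (xt - x0)) (Pi.single i 1) :=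
        (hdc.comp (by fun_prop)).clm_apply continuous_const
      have h2 : |(∫ α in (0:ℝ)..1, fderiv ℝ f (x0 + α • (xt - x0)) (Pi.single i 1)) - L|
          ≤ C * S := by
        have hsub : (∫ α in (0:ℝ)..1, fderiv ℝ f (x0 + α • (xt - x0)) (Pi.single i 1)) - L
            = ∫ α in (0:ℝ)..1,
                (fderiv ℝ f (x0 + α • (xt - x0)) (Pi.single i 1) - L) := by
          rw [intervalIntegral.integral_sub (hcont1.intervalIntegrable 0 1)
            intervalIntegrable_const]
          simp
        rw [hsub]
        have := intervalIntegral.norm_integral_le_of_norm_le_const (a := 0) (b := 1)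
          (C := C * S)
          (f := fun α => fderiv ℝ f (x0 + α • (xt - x0)) (Pi.single i 1) - L) hGdiff
        calc |∫ α in (0:ℝ)..1, (fderiv ℝ f (x0 + α • (xt - x0)) (Pi.single i 1) - L)|
            ≤ C * S * |1 - 0| := by rw [← Real.norm_eq_abs]; exact this
          _ = C * S := by norm_num
      have hbnd2 : ∀ (y : Fin M → ℝ) (α : ℝ), |α| ≤ 1 →
          ‖fderiv ℝ (fderiv ℝ f) y (α • (Pi.single i 1 : Fin M → ℝ)) (Pi.single i 1)‖ ≤ C := by
        intro y α hα
        calc ‖fderiv ℝ (fderiv ℝ f) y (α • (Pi.single i 1 : Fin M → ℝ)) (Pi.single i 1)‖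
            ≤ ‖fderiv ℝ (fderiv ℝ f) y (α • (Pi.single i 1 : Fin M → ℝ))‖
                * ‖(Pi.single i 1 : Fin M → ℝ)‖ := ContinuousLinearMap.le_opNorm _ _
          _ ≤ (‖fderiv ℝ (fderiv ℝ f) y‖ * ‖α • (Pi.single i 1 : Fin M → ℝ)‖)
                * ‖(Pi.single i 1 : Fin M → ℝ)‖ :=
              mul_le_mul_of_nonneg_right (ContinuousLinearMap.le_opNorm _ _) (norm_nonneg _)
          _ = ‖fderiv ℝ (fderiv ℝ f) y‖ * |α| := by
              rw [norm_smul, he1, Real.norm_eq_abs]; ring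
          _ ≤ C * 1 := mul_le_mul (hC2 y) hα (abs_nonneg α) hC0
          _ = C := mul_one C
      have h4 : |∫ α in (0:ℝ)..1,
          fderiv ℝ (fderiv ℝ f) (x0 + α • (xt - x0)) (α • (Pi.single i 1 : Fin M → ℝ))
            (Pi.single i 1)| ≤ C := by
        have := intervalIntegral.norm_integral_le_of_norm_le_const (a := 0) (b := 1) (C := C)
          (f := fun α => fderiv ℝ (fderiv ℝ f) (x0 + α • (xt - x0))
            (α • (Pi.single i 1 : Fin M → ℝ)) (Pi.single i 1))
          (fun α hα => hbnd2 _ α (by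
            rw [Set.uIoc_of_le zero_le_one] at hα
            rw [abs_of_pos hα.1]
            exact hα.2))
        calc |∫ α in (0:ℝ)..1, fderiv ℝ (fderiv ℝ f) (x0 + α • (xt - x0))
              (α • (Pi.single i 1 : Fin M → ℝ)) (Pi.single i 1)| ≤ C * |1 - 0| := by
              rw [← Real.norm_eq_abs]; exact this
          _ = C := by norm_num
      have h3 : |xt i - x0 i| ≤ S := by
        rw [abs_sub_comm]
        exact Finset.single_le_sum (fun k _ => abs_nonneg (x0 k - xt k)) (Finset.mem_univ i)
      calc |H x0 - L|
          = |((∫ α in (0:ℝ)..1, fderiv ℝ f (x0 + α • (xt - x0)) (Pi.single i 1)) - L)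
              + (xt i - x0 i) *
                ∫ α in (0:ℝ)..1,
                  fderiv ℝ (fderiv ℝ f) (x0 + α • (xt - x0))
                    (α • (Pi.single i 1 : Fin M → ℝ)) (Pi.single i 1)| := by
            rw [hH]; ring_nf
        _ ≤ |(∫ α in (0:ℝ)..1, fderiv ℝ f (x0 + α • (xt - x0)) (Pi.single i 1)) - L|
              + |xt i - x0 i| *
                |∫ α in (0:ℝ)..1,
                  fderiv ℝ (fderiv ℝ f) (x0 + α • (xt - x0))
                    (α • (Pi.single i 1 : Fin M → ℝ)) (Pi.single i 1)| := by
            refine (abs_add_le _ _).trans ?_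
            rw [abs_mul]
        _ ≤ C * S + S * C := by
            have h5 : |xt i - x0 i| * |∫ α in (0:ℝ)..1,
                fderiv ℝ (fderiv ℝ f) (x0 + α • (xt - x0))
                  (α • (Pi.single i 1 : Fin M → ℝ)) (Pi.single i 1)| ≤ S * C :=
              mul_le_mul h3 h4 (abs_nonneg _) hS0
            linarith [h2]
        _ = 2 * C * S := by ring
    -- bound on the derivative for positive η
    have hDbound : ∀ (η : ℝ≥0), η ≠ 0 →
        dist (deriv (fun t : ℝ => EIG η i (Function.update xt i t)) (xt i)) L
          ≤ 2 * C * (M * Real.sqrt η) := by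
      intro η hη
      haveI := hprob η
      obtain ⟨hHint, hDer⟩ := key η hη xt
      have hderiv_eq : deriv (fun t : ℝ => EIG η i (Function.update xt i t)) (xt i)
          = ∫ x0, H x0 ∂(P η) := hDer.deriv
      rw [Real.dist_eq, hderiv_eq]
      have hLconst : ∫ (_ : Fin M → ℝ), L ∂(P η) = L := by simp
      have hsubint : Integrable (fun x0 => H x0 - L) (P η) := hHint.sub (integrable_const L)
      have hSint : Integrable (fun x0 : Fin M → ℝ => 2 * C * ∑ j, |x0 j - xt j|) (P η) :=
        (integrable_finset_sum Finset.univ fun j _ => (hcoord η hη j).1).const_mul (2 * C)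
      calc |(∫ x0, H x0 ∂(P η)) - L|
          = |∫ x0, (H x0 - L) ∂(P η)| := by
            rw [integral_sub hHint (integrable_const L), hLconst]
        _ ≤ ∫ x0, |H x0 - L| ∂(P η) := by
            rw [← Real.norm_eq_abs]
            exact (norm_integral_le_integral_norm _).trans (le_of_eq (by simp))
        _ ≤ ∫ x0, 2 * C * ∑ j, |x0 j - xt j| ∂(P η) :=
            integral_mono hsubint.abs hSint (fun x0 => hptwise x0)
        _ = 2 * C * ∑ j, ∫ x0, |x0 j - xt j| ∂(P η) := by
            rw [integral_const_mul, integral_finset_sum Finset.univ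
              (fun j _ => (hcoord η hη j).1)]
        _ ≤ 2 * C * (M * Real.sqrt η) := by
            refine mul_le_mul_of_nonneg_left ?_ (by positivity)
            have := Finset.sum_le_card_nsmul Finset.univ
              (fun j : Fin M => ∫ x0, |x0 j - xt j| ∂(P η)) (Real.sqrt η)
              (fun j _ => (hcoord η hη j).2)
            simpa [Finset.card_univ, nsmul_eq_mul] using this
    rw [tendsto_iff_dist_tendsto_zero]
    have hsqrt : Tendsto (fun η : ℝ≥0 => 2 * C * ((M : ℝ) * Real.sqrt η)) (𝓝[>] 0) (𝓝 0) := by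
      have h0 : Tendsto (fun η : ℝ≥0 => Real.sqrt η) (𝓝 (0:ℝ≥0)) (𝓝 0) := by
        have h1 : Tendsto (fun η : ℝ≥0 => (η : ℝ)) (𝓝 (0:ℝ≥0)) (𝓝 (0:ℝ)) := by
          exact_mod_cast (NNReal.continuous_coe.tendsto 0)
        have := (Real.continuous_sqrt.tendsto 0).comp h1
        simpa using (by exact this : Tendsto (fun η : ℝ≥0 => Real.sqrt η) (𝓝 (0:ℝ≥0)) (𝓝 (Real.sqrt 0)))
      have := (h0.const_mul ((M : ℝ))).const_mul (2 * C)
      simpa [mul_assoc] using this.mono_left nhdsWithin_le_nhds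
    refine squeeze_zero' (Eventually.of_forall fun η => dist_nonneg) ?_ hsqrt
    filter_upwards [self_mem_nhdsWithin] with η hη
    exact hDbound η (ne_of_gt hη)
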